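/- Let z₁ ∈ ℂ with η := Im(z₁²) > 0, and let q ∈ L²(ℝ;ℂ). Consider the Volterra integral operator T on L^∞(ℝ) × (L^∞(ℝ) ∩ L²(ℝ)) defined by (Tf)₁(x) = z₁ ∫_{-∞}^{x} q(s) f₂(s) ds and (Tf)₂(x) = -z₁ ∫_{-∞}^{x} e^{2i z₁²(x-s)} \bar{q}(s) f₁(s) ds. Then ‖(Tf)₁‖_{L^∞} ≤ |z₁| ‖q‖_{L²} ‖f₂‖_{L²}, ‖(Tf)₂‖_{L^∞} ≤ C(z₁,η) ‖q‖_{L²} ‖f₁‖_{L^∞}, and ‖(Tf)₂‖_{L²} ≤ C(z₁,η) ‖q‖_{L²} ‖f₁‖_{L^∞}. Consequently, if ‖q‖_{L²} is sufficiently small, T is a contraction on this product space. -/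

import Mathlib

open MeasureTheory Complex
open scoped ENNReal NNReal

/-- First component of the Volterra operator:
`(Tf)₁(x) = z₁ ∫_{-∞}^x q(s) f₂(s) ds`. -/
noncomputable def volterra1 (z₁ : ℂ) (q f₂ : ℝ → ℂ) (x : ℝ) : ℂ :=
  z₁ * ∫ s in Set.Iic x, q s * f₂ s

/-- Second component of the Volterra operator:
`(Tf)₂(x) = -z₁ ∫_{-∞}^x e^{2 i z₁² (x-s)} \bar q(s) f₁(s) ds`. -/
noncomputable def volterra2 (z₁ : ℂ) (q f₁ : ℝ → ℂ) (x : ℝ) : ℂ :=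
  -z₁ * ∫ s in Set.Iic x,
    Complex.exp (2 * Complex.I * z₁ ^ 2 * (x - s)) * (starRingEnd ℂ) (q s) * f₁ s

open Real Set in
private lemma lint_exp_base {c : ℝ} (hc : 0 < c) :
    ∫⁻ u : ℝ, (Ici (0:ℝ)).indicator (fun u : ℝ => ENNReal.ofReal (Real.exp (-(c*u)))) u
      = ENNReal.ofReal (1/c) := by
  rw [lintegral_indicator measurableSet_Ici]
  have hint : IntegrableOn (fun u : ℝ => Real.exp (-(c*u))) (Ici (0:ℝ)) := by
    rw [integrableOn_Ici_iff_integrableOn_Ioi]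
    simpa [neg_mul] using exp_neg_integrableOn_Ioi 0 hc
  rw [← ofReal_integral_eq_lintegral_ofReal hint
    (Filter.Eventually.of_forall fun u => (Real.exp_pos _).le)]
  congr 1
  rw [integral_Ici_eq_integral_Ioi]
  have h := integral_comp_mul_left_Ioi (fun u : ℝ => Real.exp (-u)) 0 hc
  simp only [mul_zero, integral_exp_neg_Ioi_zero, smul_eq_mul, mul_one] at h
  rw [h]
  simp [one_div]

private lemma meas_G (c : ℝ) :
    Measurable ((Set.Ici (0:ℝ)).indicator (fun u : ℝ => ENNReal.ofReal (Real.exp (-(c*u))))) :=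
  Measurable.indicator
    ((Real.continuous_exp.comp (continuous_const.mul continuous_id).neg).measurable.ennreal_ofReal)
    measurableSet_Ici

private lemma lint_exp_Iic {c : ℝ} (hc : 0 < c) (x : ℝ) :
    ∫⁻ s in Set.Iic x, ENNReal.ofReal (Real.exp (-(c*(x-s)))) = ENNReal.ofReal (1/c) := by
  set G := (Set.Ici (0:ℝ)).indicator (fun u : ℝ => ENNReal.ofReal (Real.exp (-(c*u)))) with hG
  have h1 : ∫⁻ s in Set.Iic x, ENNReal.ofReal (Real.exp (-(c*(x-s)))) = ∫⁻ s : ℝ, G (x - s) := by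
    rw [← lintegral_indicator measurableSet_Iic]
    refine lintegral_congr fun s => ?_
    by_cases h : s ≤ x
    · simp [hG, Set.indicator_of_mem, h, Set.mem_Iic.mpr h, Set.mem_Ici.mpr (sub_nonneg.mpr h)]
    · have h' : ¬ (0 ≤ x - s) := by linarith
      simp [hG, Set.indicator_of_notMem, h, Set.mem_Iic, Set.mem_Ici, h']
  rw [h1, (MeasureTheory.Measure.measurePreserving_sub_left volume x).lintegral_comp (meas_G c)]
  exact lint_exp_base hc

private lemma lint_exp_Ici {c : ℝ} (hc : 0 < c) (s : ℝ) :
    ∫⁻ x in Set.Ici s, ENNReal.ofReal (Real.exp (-(c*(x-s)))) = ENNReal.ofReal (1/c) := by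
  set G := (Set.Ici (0:ℝ)).indicator (fun u : ℝ => ENNReal.ofReal (Real.exp (-(c*u)))) with hG
  have h1 : ∫⁻ x in Set.Ici s, ENNReal.ofReal (Real.exp (-(c*(x-s)))) = ∫⁻ x : ℝ, G (x - s) := by
    rw [← lintegral_indicator measurableSet_Ici]
    refine lintegral_congr fun x => ?_
    by_cases h : s ≤ x
    · simp [hG, Set.indicator_of_mem, Set.mem_Ici.mpr h, Set.mem_Ici.mpr (sub_nonneg.mpr h)]
    · have h' : ¬ (0 ≤ x - s) := by linarith
      simp [hG, Set.indicator_of_notMem, Set.mem_Ici, h, h']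
  rw [h1, lintegral_sub_right_eq_self G s]
  exact lint_exp_base hc

private lemma eLpNormTop_le {v : ℝ → ℂ} {B : ℝ≥0∞} (h : ∀ x, (‖v x‖₊ : ℝ≥0∞) ≤ B) :
    eLpNorm v ⊤ volume ≤ B := by
  rw [show ((⊤:ℝ≥0∞)) = ∞ from rfl, eLpNorm_exponent_top, eLpNormEssSup]
  exact essSup_le_of_ae_le B (Filter.Eventually.of_forall h)

private lemma hold2 {μ : Measure ℝ} {f g : ℝ → ℝ≥0∞} (hf : AEMeasurable f μ)
    (hg : AEMeasurable g μ) :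
    ∫⁻ s, f s * g s ∂μ
      ≤ (∫⁻ s, f s ^ (2:ℝ) ∂μ) ^ ((1:ℝ)/2) * (∫⁻ s, g s ^ (2:ℝ) ∂μ) ^ ((1:ℝ)/2) :=
  ENNReal.lintegral_mul_le_Lp_mul_Lq μ ⟨by norm_num, by norm_num, by norm_num⟩ hf hg

private lemma enorm_kernel {z₁ : ℂ} {η : ℝ} (hη : (z₁^2).im = η) (x s : ℝ) :
    (‖Complex.exp (2 * Complex.I * z₁ ^ 2 * ((x:ℂ) - (s:ℂ)))‖₊ : ℝ≥0∞)
      = ENNReal.ofReal (Real.exp (-(2*η*(x-s)))) := by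
  rw [← enorm_eq_nnnorm, ← ofReal_norm]
  congr 1
  rw [Complex.norm_exp]
  congr 1
  have h : ((x:ℂ) - s) = ((x - s : ℝ) : ℂ) := by push_cast; ring
  rw [h, mul_comm, Complex.re_ofReal_mul]
  simp only [Complex.mul_re, Complex.mul_im, Complex.I_re, Complex.I_im, Complex.re_ofNat,
    Complex.im_ofNat, hη]
  ring

private lemma snorm2_eq (h : ℝ → ℂ) :
    eLpNorm h 2 volume = (∫⁻ s, (‖h s‖₊ : ℝ≥0∞) ^ (2:ℝ)) ^ ((1:ℝ)/2) := by
  rw [eLpNorm_eq_lintegral_rpow_enorm_toReal (by norm_num) (by norm_num)]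
  norm_num
  rfl

private lemma bound1 (z₁ : ℂ) (q f₂ : ℝ → ℂ) (hq : MemLp q 2 (volume : Measure ℝ))
    (hf₂ : MemLp f₂ 2 (volume : Measure ℝ)) :
    eLpNorm (volterra1 z₁ q f₂) ⊤ volume
      ≤ ENNReal.ofReal ‖z₁‖ * eLpNorm q 2 volume * eLpNorm f₂ 2 volume := by
  rw [mul_assoc]
  apply eLpNormTop_le
  intro x
  have h1 : (‖volterra1 z₁ q f₂ x‖₊ : ℝ≥0∞)
      ≤ (‖z₁‖₊ : ℝ≥0∞) * ∫⁻ s in Set.Iic x, (‖q s‖₊ : ℝ≥0∞) * (‖f₂ s‖₊ : ℝ≥0∞) := by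
    rw [volterra1, nnnorm_mul, ENNReal.coe_mul]
    refine mul_le_mul_right ?_ _
    refine (enorm_integral_le_lintegral_enorm _).trans_eq ?_
    refine lintegral_congr fun s => ?_
    rw [enorm_eq_nnnorm, nnnorm_mul, ENNReal.coe_mul]
  refine h1.trans ?_
  rw [ofReal_norm, enorm_eq_nnnorm]
  refine mul_le_mul_right ?_ _
  refine (setLIntegral_le_lintegral _ _).trans ?_
  calc ∫⁻ s, (‖q s‖₊ : ℝ≥0∞) * (‖f₂ s‖₊ : ℝ≥0∞)
      ≤ (∫⁻ s, (‖q s‖₊:ℝ≥0∞) ^ (2:ℝ)) ^ ((1:ℝ)/2) * (∫⁻ s, (‖f₂ s‖₊:ℝ≥0∞) ^ (2:ℝ)) ^ ((1:ℝ)/2) :=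
        hold2 hq.1.aemeasurable.enorm hf₂.1.aemeasurable.enorm
    _ = eLpNorm q 2 volume * eLpNorm f₂ 2 volume := by rw [snorm2_eq, snorm2_eq]

private lemma bound23 (z₁ : ℂ) (η : ℝ) (hη : (z₁ ^ 2).im = η) (hηpos : 0 < η)
    (q f₁ : ℝ → ℂ) (hq : MemLp q 2 (volume : Measure ℝ))
    (hf₁ : MemLp f₁ ⊤ (volume : Measure ℝ)) :
    eLpNorm (volterra2 z₁ q f₁) ⊤ volume
      ≤ ENNReal.ofReal (‖z₁‖ * (1/(4*η))^((1:ℝ)/2)) * eLpNorm q 2 volume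
          * eLpNorm f₁ ⊤ volume ∧
    eLpNorm (volterra2 z₁ q f₁) 2 volume
      ≤ ENNReal.ofReal (‖z₁‖ * (1/(2*η))) * eLpNorm q 2 volume * eLpNorm f₁ ⊤ volume := by
  obtain ⟨q', hq'meas, hqq'⟩ := hq.1.aemeasurable
  set Qm : ℝ → ℝ≥0∞ := fun s => (‖q' s‖₊ : ℝ≥0∞) with hQm
  have hQmmeas : Measurable Qm := hq'meas.enorm
  have hNq : eLpNorm q 2 volume = (∫⁻ s, Qm s ^ (2:ℝ)) ^ ((1:ℝ)/2) := by
    rw [eLpNorm_congr_ae hqq', snorm2_eq]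
  set M₁ := eLpNorm f₁ ⊤ volume with hM₁
  have hM₁ne : M₁ ≠ ∞ := hf₁.2.ne
  set K : ℝ → ℝ → ℝ≥0∞ := fun x s => ENNReal.ofReal (Real.exp (-(2*η*(x-s)))) with hK
  have hKmeas : ∀ x, Measurable (K x) := fun x =>
    ((Real.continuous_exp.comp (by fun_prop : Continuous fun s : ℝ => -(2*η*(x-s)))).measurable).ennreal_ofReal
  -- pointwise bound on the integrand
  have hptA : ∀ x, (‖volterra2 z₁ q f₁ x‖₊ : ℝ≥0∞)
      ≤ (‖z₁‖₊:ℝ≥0∞) * ∫⁻ s in Set.Iic x, K x s * (‖q s‖₊:ℝ≥0∞) * (‖f₁ s‖₊:ℝ≥0∞) := by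
    intro x
    rw [volterra2, nnnorm_mul, ENNReal.coe_mul, nnnorm_neg]
    refine mul_le_mul_right ?_ _
    refine (enorm_integral_le_lintegral_enorm _).trans_eq ?_
    refine lintegral_congr fun s => ?_
    rw [enorm_eq_nnnorm, nnnorm_mul, nnnorm_mul, ENNReal.coe_mul, ENNReal.coe_mul, enorm_kernel hη,
      RCLike.nnnorm_conj]
  have hf₁bd : ∀ᵐ s : ℝ ∂(volume : Measure ℝ), (‖f₁ s‖₊:ℝ≥0∞) ≤ M₁ := by
    have := ae_le_eLpNormEssSup (f := f₁) (μ := (volume : Measure ℝ))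
    rw [hM₁, show ((⊤:ℝ≥0∞)) = ∞ from rfl, eLpNorm_exponent_top]
    exact this
  have hptB : ∀ x, (∫⁻ s in Set.Iic x, K x s * (‖q s‖₊:ℝ≥0∞) * (‖f₁ s‖₊:ℝ≥0∞))
      ≤ (∫⁻ s in Set.Iic x, K x s * Qm s) * M₁ := by
    intro x
    have e1 : (∫⁻ s in Set.Iic x, K x s * (‖q s‖₊:ℝ≥0∞) * (‖f₁ s‖₊:ℝ≥0∞))
        ≤ ∫⁻ s in Set.Iic x, (K x s * (‖q s‖₊:ℝ≥0∞)) * M₁ :=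
      lintegral_mono_ae (ae_restrict_of_ae (hf₁bd.mono fun s hs =>
        mul_le_mul' le_rfl hs))
    refine e1.trans ?_
    rw [lintegral_mul_const' M₁ _ hM₁ne]
    refine mul_le_mul_left (le_of_eq ?_) _
    refine lintegral_congr_ae (ae_restrict_of_ae (hqq'.mono fun s hs => ?_))
    simp [hQm, hs]
  -- Cauchy-Schwarz for the sup bound
  have hCS1 : ∀ x, (∫⁻ s in Set.Iic x, K x s * Qm s)
      ≤ ENNReal.ofReal ((1/(4*η))^((1:ℝ)/2)) * eLpNorm q 2 volume := by
    intro x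
    have hK2 : (∫⁻ s in Set.Iic x, K x s ^ (2:ℝ)) = ENNReal.ofReal (1/(4*η)) := by
      have : ∀ s : ℝ, K x s ^ (2:ℝ) = ENNReal.ofReal (Real.exp (-(4*η*(x-s)))) := by
        intro s
        rw [hK]
        rw [ENNReal.ofReal_rpow_of_nonneg (Real.exp_nonneg _) (by norm_num)]
        congr 1
        rw [← Real.exp_mul]
        congr 1
        ring
      rw [lintegral_congr this]
      exact lint_exp_Iic (by positivity) x
    calc (∫⁻ s in Set.Iic x, K x s * Qm s)
        ≤ (∫⁻ s in Set.Iic x, K x s ^ (2:ℝ)) ^ ((1:ℝ)/2)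
            * (∫⁻ s in Set.Iic x, Qm s ^ (2:ℝ)) ^ ((1:ℝ)/2) :=
          hold2 (hKmeas x).aemeasurable hQmmeas.aemeasurable
      _ ≤ ENNReal.ofReal ((1/(4*η))^((1:ℝ)/2)) * eLpNorm q 2 volume := by
          rw [hK2, ← ENNReal.ofReal_rpow_of_nonneg (by positivity) (by norm_num), hNq]
          exact mul_le_mul_right
            (ENNReal.rpow_le_rpow (setLIntegral_le_lintegral _ _) (by norm_num)) _
  -- sup bound
  constructor
  · apply eLpNormTop_le
    intro x
    refine (hptA x).trans ?_
    refine (mul_le_mul_right (hptB x) _).trans ?_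
    refine (mul_le_mul_right (mul_le_mul_left (hCS1 x) M₁) _).trans_eq ?_
    rw [ENNReal.ofReal_mul (norm_nonneg _), ofReal_norm, enorm_eq_nnnorm]
    ring
  -- L² bound
  · -- Cauchy-Schwarz splitting the kernel
    have hKne : ∀ x s, K x s ≠ ∞ := fun x s => ENNReal.ofReal_ne_top
    have hCS2 : ∀ x, (∫⁻ s in Set.Iic x, K x s * Qm s)
        ≤ ENNReal.ofReal (1/(2*η)) ^ ((1:ℝ)/2)
            * (∫⁻ s in Set.Iic x, K x s * Qm s ^ (2:ℝ)) ^ ((1:ℝ)/2) := by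
      intro x
      have hsplit : ∀ s : ℝ, K x s * Qm s
          = (K x s ^ ((1:ℝ)/2)) * (K x s ^ ((1:ℝ)/2) * Qm s) := by
        intro s
        rw [← mul_assoc, ← ENNReal.rpow_add _ _ (by positivity : K x s ≠ 0) (hKne x s)]
        norm_num
      calc (∫⁻ s in Set.Iic x, K x s * Qm s)
          = ∫⁻ s in Set.Iic x, (K x s ^ ((1:ℝ)/2)) * (K x s ^ ((1:ℝ)/2) * Qm s) :=
            lintegral_congr hsplit
        _ ≤ (∫⁻ s in Set.Iic x, (K x s ^ ((1:ℝ)/2)) ^ (2:ℝ)) ^ ((1:ℝ)/2)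
              * (∫⁻ s in Set.Iic x, (K x s ^ ((1:ℝ)/2) * Qm s) ^ (2:ℝ)) ^ ((1:ℝ)/2) :=
            hold2 ((hKmeas x).pow_const _).aemeasurable
              (((hKmeas x).pow_const _).mul hQmmeas).aemeasurable
        _ = (∫⁻ s in Set.Iic x, K x s) ^ ((1:ℝ)/2)
              * (∫⁻ s in Set.Iic x, K x s * Qm s ^ (2:ℝ)) ^ ((1:ℝ)/2) := by
            congr 1
            · congr 1
              refine lintegral_congr fun s => ?_
              rw [← ENNReal.rpow_mul]
              norm_num
            · congr 1
              refine lintegral_congr fun s => ?_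
              rw [ENNReal.mul_rpow_of_nonneg _ _ (by norm_num), ← ENNReal.rpow_mul]
              norm_num
        _ = ENNReal.ofReal (1/(2*η)) ^ ((1:ℝ)/2)
              * (∫⁻ s in Set.Iic x, K x s * Qm s ^ (2:ℝ)) ^ ((1:ℝ)/2) := by
            rw [show (∫⁻ s in Set.Iic x, K x s) = ENNReal.ofReal (1/(2*η)) from
              lint_exp_Iic (by positivity) x]
    -- Tonelli
    have hTon : (∫⁻ x, ∫⁻ s in Set.Iic x, K x s * Qm s ^ (2:ℝ))
        = ENNReal.ofReal (1/(2*η)) * ∫⁻ s, Qm s ^ (2:ℝ) := by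
      have hsq : ∀ s : ℝ, Qm s ^ (2:ℝ) = Qm s * Qm s := fun s => by
        rw [show (2:ℝ) = ((2:ℕ):ℝ) by norm_num, ENNReal.rpow_natCast, sq]
      set F : ℝ → ℝ → ℝ≥0∞ := fun x s =>
        ({p : ℝ × ℝ | p.2 ≤ p.1}).indicator
          (fun p => ENNReal.ofReal (Real.exp (-(2*η*(p.1-p.2)))) * (Qm p.2 * Qm p.2)) (x, s)
        with hF
      have hFmeas : Measurable (Function.uncurry F) := by
        have : Function.uncurry F = ({p : ℝ × ℝ | p.2 ≤ p.1}).indicator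
            (fun p => ENNReal.ofReal (Real.exp (-(2*η*(p.1-p.2)))) * (Qm p.2 * Qm p.2)) := by
          ext p
          simp [Function.uncurry, hF]
        rw [this]
        refine Measurable.indicator ?_ (measurableSet_le measurable_snd measurable_fst)
        refine Measurable.mul ?_ (((hQmmeas.comp measurable_snd)).mul
          (hQmmeas.comp measurable_snd))
        exact (Real.continuous_exp.comp
          (by fun_prop : Continuous fun p : ℝ × ℝ => -(2*η*(p.1-p.2)))).measurable.ennreal_ofReal
      have hinner : ∀ x, (∫⁻ s in Set.Iic x, K x s * Qm s ^ (2:ℝ)) = ∫⁻ s, F x s := by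
        intro x
        rw [← lintegral_indicator measurableSet_Iic]
        refine lintegral_congr fun s => ?_
        by_cases h : s ≤ x
        · rw [Set.indicator_of_mem (Set.mem_Iic.mpr h), hsq s]
          simp [hF, hK, Set.indicator_of_mem, h, Set.mem_setOf_eq]
        · simp [hF, hK, Set.indicator_of_notMem, h, Set.mem_Iic, Set.mem_setOf_eq]
      have houter : ∀ s, (∫⁻ x, F x s) = ENNReal.ofReal (1/(2*η)) * Qm s ^ (2:ℝ) := by
        intro s
        have h1 : (fun x => F x s)
            = (Set.Ici s).indicator (fun x => K x s * Qm s ^ (2:ℝ)) := by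
          ext x
          by_cases h : s ≤ x
          · rw [Set.indicator_of_mem (Set.mem_Ici.mpr h), hsq s]
            simp [hF, hK, Set.indicator_of_mem, h, Set.mem_setOf_eq]
          · simp [hF, hK, Set.indicator_of_notMem, h, Set.mem_Ici, Set.mem_setOf_eq]
        rw [h1, lintegral_indicator measurableSet_Ici,
          lintegral_mul_const' _ _ (by
            rw [hsq s]; exact ENNReal.mul_ne_top ENNReal.coe_ne_top ENNReal.coe_ne_top),
          show (∫⁻ x in Set.Ici s, K x s) = ENNReal.ofReal (1/(2*η)) from
            lint_exp_Ici (by positivity) s, mul_comm]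
      calc (∫⁻ x, ∫⁻ s in Set.Iic x, K x s * Qm s ^ (2:ℝ))
          = ∫⁻ x, ∫⁻ s, F x s := by exact lintegral_congr hinner
        _ = ∫⁻ s, ∫⁻ x, F x s := lintegral_lintegral_swap hFmeas.aemeasurable
        _ = ∫⁻ s, ENNReal.ofReal (1/(2*η)) * Qm s ^ (2:ℝ) := lintegral_congr houter
        _ = ENNReal.ofReal (1/(2*η)) * ∫⁻ s, Qm s ^ (2:ℝ) :=
            lintegral_const_mul' _ _ ENNReal.ofReal_ne_top
    -- assemble the L² bound
    set c : ℝ≥0∞ := ENNReal.ofReal (1/(2*η)) with hc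
    set A : ℝ≥0∞ := (‖z₁‖₊ : ℝ≥0∞) * M₁ with hA
    set Nq : ℝ≥0∞ := eLpNorm q 2 volume with hNq2
    have hpt2 : ∀ x, (‖volterra2 z₁ q f₁ x‖₊ : ℝ≥0∞) ^ (2:ℝ)
        ≤ (A * c ^ ((1:ℝ)/2)) ^ (2:ℝ)
            * (∫⁻ s in Set.Iic x, K x s * Qm s ^ (2:ℝ)) := by
      intro x
      have h0 : (‖volterra2 z₁ q f₁ x‖₊ : ℝ≥0∞)
          ≤ (A * c ^ ((1:ℝ)/2)) * (∫⁻ s in Set.Iic x, K x s * Qm s ^ (2:ℝ)) ^ ((1:ℝ)/2) := by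
        refine (hptA x).trans ?_
        refine (mul_le_mul_right (hptB x) _).trans ?_
        refine (mul_le_mul_right (mul_le_mul_left (hCS2 x) M₁) _).trans_eq ?_
        ring
      calc (‖volterra2 z₁ q f₁ x‖₊ : ℝ≥0∞) ^ (2:ℝ)
          ≤ ((A * c ^ ((1:ℝ)/2)) * (∫⁻ s in Set.Iic x, K x s * Qm s ^ (2:ℝ)) ^ ((1:ℝ)/2)) ^ (2:ℝ) :=
            ENNReal.rpow_le_rpow h0 (by norm_num)
        _ = (A * c ^ ((1:ℝ)/2)) ^ (2:ℝ) * (∫⁻ s in Set.Iic x, K x s * Qm s ^ (2:ℝ)) := by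
            rw [ENNReal.mul_rpow_of_nonneg _ _ (by norm_num : (0:ℝ) ≤ 2), ← ENNReal.rpow_mul]
            norm_num
    have hfin : (∫⁻ x, (‖volterra2 z₁ q f₁ x‖₊ : ℝ≥0∞) ^ (2:ℝ))
        ≤ ((A * c) * Nq) ^ (2:ℝ) := by
      calc (∫⁻ x, (‖volterra2 z₁ q f₁ x‖₊ : ℝ≥0∞) ^ (2:ℝ))
          ≤ ∫⁻ x, (A * c ^ ((1:ℝ)/2)) ^ (2:ℝ)
              * (∫⁻ s in Set.Iic x, K x s * Qm s ^ (2:ℝ)) := lintegral_mono hpt2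
        _ = (A * c ^ ((1:ℝ)/2)) ^ (2:ℝ)
              * (∫⁻ x, ∫⁻ s in Set.Iic x, K x s * Qm s ^ (2:ℝ)) := by
            refine lintegral_const_mul' _ _ ?_
            refine (ENNReal.rpow_lt_top_of_nonneg (by norm_num) ?_).ne
            exact ENNReal.mul_ne_top
              (ENNReal.mul_ne_top ENNReal.coe_ne_top hM₁ne)
              (ENNReal.rpow_lt_top_of_nonneg (by norm_num) ENNReal.ofReal_ne_top).ne
        _ = (A * c ^ ((1:ℝ)/2)) ^ (2:ℝ) * (c * ∫⁻ s, Qm s ^ (2:ℝ)) := by rw [hTon]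
        _ = ((A * c) * Nq) ^ (2:ℝ) := by
            have hNqB : Nq ^ (2:ℝ) = ∫⁻ s, Qm s ^ (2:ℝ) := by
              rw [hNq, ← ENNReal.rpow_mul]
              norm_num
            rw [← hNqB,
              ENNReal.mul_rpow_of_nonneg _ _ (by norm_num : (0:ℝ) ≤ 2),
              ENNReal.mul_rpow_of_nonneg _ _ (by norm_num : (0:ℝ) ≤ 2),
              ENNReal.mul_rpow_of_nonneg _ _ (by norm_num : (0:ℝ) ≤ 2),
              ← ENNReal.rpow_mul]
            norm_num
            ring
    have : eLpNorm (volterra2 z₁ q f₁) 2 volume ≤ (A * c) * Nq := by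
      rw [snorm2_eq]
      refine (ENNReal.rpow_le_rpow hfin (by norm_num : (0:ℝ) ≤ 1/2)).trans_eq ?_
      rw [← ENNReal.rpow_mul]
      norm_num
    refine this.trans_eq ?_
    rw [ENNReal.ofReal_mul (norm_nonneg _), ofReal_norm, enorm_eq_nnnorm, hA, ← hc]
    ring

theorem volterra_bounds_and_contraction (z₁ : ℂ) (η : ℝ)
    (hη : (z₁ ^ 2).im = η) (hηpos : 0 < η) :
    (∃ C > 0, ∀ q : ℝ → ℂ, MemLp q 2 (volume : Measure ℝ) →
      ∀ f₁ f₂ : ℝ → ℂ, MemLp f₁ ⊤ (volume : Measure ℝ) →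
        MemLp f₂ ⊤ (volume : Measure ℝ) → MemLp f₂ 2 (volume : Measure ℝ) →
        eLpNorm (volterra1 z₁ q f₂) ⊤ volume
            ≤ ENNReal.ofReal ‖z₁‖ * eLpNorm q 2 volume * eLpNorm f₂ 2 volume ∧
        eLpNorm (volterra2 z₁ q f₁) ⊤ volume
            ≤ ENNReal.ofReal C * eLpNorm q 2 volume * eLpNorm f₁ ⊤ volume ∧
        eLpNorm (volterra2 z₁ q f₁) 2 volume
            ≤ ENNReal.ofReal C * eLpNorm q 2 volume * eLpNorm f₁ ⊤ volume) ∧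
    -- consequently, `T` is a contraction for `‖q‖_{L²}` small enough:
    (∃ δ > 0, ∀ q : ℝ → ℂ, MemLp q 2 (volume : Measure ℝ) →
      eLpNorm q 2 volume ≤ ENNReal.ofReal δ →
      ∀ f₁ f₂ : ℝ → ℂ, MemLp f₁ ⊤ (volume : Measure ℝ) →
        MemLp f₂ ⊤ (volume : Measure ℝ) → MemLp f₂ 2 (volume : Measure ℝ) →
        eLpNorm (volterra1 z₁ q f₂) ⊤ volume
            + eLpNorm (volterra2 z₁ q f₁) ⊤ volume
            + eLpNorm (volterra2 z₁ q f₁) 2 volume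
          ≤ (1 / 2 : ENNReal) *
            (eLpNorm f₁ ⊤ volume + eLpNorm f₂ ⊤ volume + eLpNorm f₂ 2 volume)) := by
  set c1 : ℝ := (1/(4*η))^((1:ℝ)/2) with hc1
  set c2 : ℝ := 1/(2*η) with hc2
  have hc1pos : 0 < c1 := by rw [hc1]; positivity
  have hc2pos : 0 < c2 := by rw [hc2]; positivity
  set C : ℝ := ‖z₁‖ * (c1 + c2) + 1 with hC
  have hCpos : 0 < C := by positivity
  have hkey : ∀ q : ℝ → ℂ, MemLp q 2 (volume : Measure ℝ) →
      ∀ f₁ f₂ : ℝ → ℂ, MemLp f₁ ⊤ (volume : Measure ℝ) →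
        MemLp f₂ ⊤ (volume : Measure ℝ) → MemLp f₂ 2 (volume : Measure ℝ) →
        eLpNorm (volterra1 z₁ q f₂) ⊤ volume
            ≤ ENNReal.ofReal ‖z₁‖ * eLpNorm q 2 volume * eLpNorm f₂ 2 volume ∧
        eLpNorm (volterra2 z₁ q f₁) ⊤ volume
            ≤ ENNReal.ofReal C * eLpNorm q 2 volume * eLpNorm f₁ ⊤ volume ∧
        eLpNorm (volterra2 z₁ q f₁) 2 volume
            ≤ ENNReal.ofReal C * eLpNorm q 2 volume * eLpNorm f₁ ⊤ volume := by
    intro q hq f₁ f₂ hf₁ hf₂t hf₂2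
    have h1 := bound1 z₁ q f₂ hq hf₂2
    obtain ⟨h2, h3⟩ := bound23 z₁ η hη hηpos q f₁ hq hf₁
    have hmono : ∀ a : ℝ, 0 ≤ a → a ≤ c1 + c2 →
        ENNReal.ofReal (‖z₁‖ * a) ≤ ENNReal.ofReal C :=
      fun a ha hac => ENNReal.ofReal_le_ofReal
        (by nlinarith [norm_nonneg z₁])
    exact ⟨h1,
      h2.trans (mul_le_mul_left (mul_le_mul_left
        (hmono c1 hc1pos.le (by linarith)) _) _),
      h3.trans (mul_le_mul_left (mul_le_mul_left
        (hmono c2 hc2pos.le (by linarith)) _) _)⟩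
  refine ⟨⟨C, hCpos, hkey⟩, ?_⟩
  set δ : ℝ := min (1/(2*(‖z₁‖+1))) (1/(8*C)) with hδ
  have hδpos : 0 < δ := lt_min (by positivity) (by positivity)
  refine ⟨δ, hδpos, ?_⟩
  intro q hq hqδ f₁ f₂ hf₁ hf₂t hf₂2
  obtain ⟨h1, h2, h3⟩ := hkey q hq f₁ f₂ hf₁ hf₂t hf₂2
  have hhalf : ENNReal.ofReal (1/2 : ℝ) = (1/2 : ℝ≥0∞) := by
    rw [ENNReal.ofReal_div_of_pos (by norm_num)]
    norm_num
  set M := eLpNorm f₁ ⊤ volume with hM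
  set S := eLpNorm f₂ ⊤ volume with hS
  set N2 := eLpNorm f₂ 2 volume with hN2
  have e1 : eLpNorm (volterra1 z₁ q f₂) ⊤ volume ≤ (1/2 : ℝ≥0∞) * N2 := by
    refine h1.trans ?_
    refine (mul_le_mul_left (mul_le_mul_right hqδ _) _).trans ?_
    refine mul_le_mul_left ?_ _
    rw [← ENNReal.ofReal_mul (norm_nonneg _), ← hhalf]
    refine ENNReal.ofReal_le_ofReal ?_
    have hδ1 : δ ≤ 1/(2*(‖z₁‖+1)) := min_le_left _ _
    have h0 : 0 ≤ ‖z₁‖ := norm_nonneg z₁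
    have ha : ‖z₁‖ * δ ≤ ‖z₁‖ * (1/(2*(‖z₁‖+1))) := mul_le_mul_of_nonneg_left hδ1 h0
    have hb : ‖z₁‖ * (1/(2*(‖z₁‖+1))) ≤ 1/2 := by
      rw [mul_one_div, div_le_div_iff₀ (by positivity) (by norm_num)]
      nlinarith
    linarith
  have hCδ : ENNReal.ofReal C * ENNReal.ofReal δ ≤ ENNReal.ofReal (1/4 : ℝ) := by
    rw [← ENNReal.ofReal_mul hCpos.le]
    refine ENNReal.ofReal_le_ofReal ?_
    have hδ2 : δ ≤ 1/(8*C) := min_le_right _ _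
    have ha : C * δ ≤ C * (1/(8*C)) := mul_le_mul_of_nonneg_left hδ2 hCpos.le
    have hb : C * (1/(8*C)) = 1/8 := by
      field_simp
    linarith
  have e2 : eLpNorm (volterra2 z₁ q f₁) ⊤ volume ≤ ENNReal.ofReal (1/4 : ℝ) * M :=
    h2.trans ((mul_le_mul_left (mul_le_mul_right hqδ _) _).trans
      (mul_le_mul_left hCδ _))
  have e3 : eLpNorm (volterra2 z₁ q f₁) 2 volume ≤ ENNReal.ofReal (1/4 : ℝ) * M :=
    h3.trans ((mul_le_mul_left (mul_le_mul_right hqδ _) _).trans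
      (mul_le_mul_left hCδ _))
  calc eLpNorm (volterra1 z₁ q f₂) ⊤ volume + eLpNorm (volterra2 z₁ q f₁) ⊤ volume
        + eLpNorm (volterra2 z₁ q f₁) 2 volume
      ≤ (1/2 : ℝ≥0∞) * N2 + ENNReal.ofReal (1/4 : ℝ) * M + ENNReal.ofReal (1/4 : ℝ) * M :=
        add_le_add (add_le_add e1 e2) e3
    _ ≤ (1/2 : ℝ≥0∞) * (M + S + N2) := by
        rw [mul_add, mul_add]
        have h14 : ENNReal.ofReal (1/4 : ℝ) * M + ENNReal.ofReal (1/4 : ℝ) * M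
            = (1/2 : ℝ≥0∞) * M := by
          rw [← add_mul, ← ENNReal.ofReal_add (by norm_num) (by norm_num), ← hhalf]
          norm_num
        calc (1/2 : ℝ≥0∞) * N2 + ENNReal.ofReal (1/4 : ℝ) * M + ENNReal.ofReal (1/4 : ℝ) * M
            = (1/2 : ℝ≥0∞) * N2 + (ENNReal.ofReal (1/4 : ℝ) * M + ENNReal.ofReal (1/4 : ℝ) * M) := by
              rw [add_assoc]
          _ = (1/2 : ℝ≥0∞) * N2 + (1/2 : ℝ≥0∞) * M := by rw [h14]
          _ = (1/2 : ℝ≥0∞) * M + (1/2 : ℝ≥0∞) * N2 := add_comm _ _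
          _ ≤ ((1/2 : ℝ≥0∞) * M + (1/2 : ℝ≥0∞) * S) + (1/2 : ℝ≥0∞) * N2 :=
              add_le_add (self_le_add_right _ _) le_rfl
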